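/- arXiv:1603.02464 — 2 statements merged into one kernel-verified Lean document; each statement's English description precedes it below -/
import Mathlib

section
/- Among all n triples of consecutive vertices, the regular n-gon of side length 1 minimizes the maximal discrete curvature among equilateral closed polygons with n segments: for any closed equilateral polygon p in ℝ^d with n vertices and unit side lengths, the sum of exterior angles satisfies Σ_{i=1}^n φ_i ≥ 2π, and hence the maximal exterior angle max_i φ_i ≥ 2π/n, with equality if and only if all exterior angles equal 2π/n. Consequently maxCurv(p) = max_i 2 tan(φ_i/2) ≥ 2 tan(π/n) = maxCurv(g_n). -/
open Real
open scoped Real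

open InnerProductGeometry
open scoped RealInnerProductSpace

variable {V : Type*} [NormedAddCommGroup V] [InnerProductSpace ℝ V]

private lemma angle_triangle_unit {x y z : V} (hx : ‖x‖ = 1) (hy : ‖y‖ = 1) (hz : ‖z‖ = 1) :
    angle x z ≤ angle x y + angle y z := by
  by_cases hab : π ≤ angle x y + angle y z
  · exact (angle_le_pi x z).trans hab
  push_neg at hab
  have ha0 := angle_nonneg x y
  have hb0 := angle_nonneg y z
  have hc0 := angle_nonneg x z
  have hcπ := angle_le_pi x z
  -- cosines
  have hca : Real.cos (angle x y) = ⟪x, y⟫ := by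
    rw [cos_angle, hx, hy]; ring
  have hcb : Real.cos (angle y z) = ⟪y, z⟫ := by
    rw [cos_angle, hy, hz]; ring
  have hcc : Real.cos (angle x z) = ⟪x, z⟫ := by
    rw [cos_angle, hx, hz]; ring
  -- sines via projections
  set u : V := x - ⟪x, y⟫ • y with hu
  set v : V := z - ⟪y, z⟫ • y with hv
  have hyy : ⟪y, y⟫ = (1:ℝ) := by
    rw [real_inner_self_eq_norm_mul_norm, hy]; norm_num
  have hnu : ‖u‖ ^ 2 = 1 - ⟪x, y⟫ ^ 2 := by
    rw [← real_inner_self_eq_norm_sq]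
    simp only [hu, inner_sub_left, inner_sub_right, real_inner_smul_left, real_inner_smul_right,
      hyy, real_inner_comm y x]
    have : ⟪x, x⟫ = (1:ℝ) := by rw [real_inner_self_eq_norm_mul_norm, hx]; norm_num
    rw [this]; ring
  have hnv : ‖v‖ ^ 2 = 1 - ⟪y, z⟫ ^ 2 := by
    rw [← real_inner_self_eq_norm_sq]
    simp only [hv, inner_sub_left, inner_sub_right, real_inner_smul_left, real_inner_smul_right,
      hyy, real_inner_comm y z]
    have : ⟪z, z⟫ = (1:ℝ) := by rw [real_inner_self_eq_norm_mul_norm, hz]; norm_num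
    rw [this]; ring
  have hsa : Real.sin (angle x y) = ‖u‖ := by
    have h1 : Real.sin (angle x y) ^ 2 = ‖u‖ ^ 2 := by
      rw [hnu, Real.sin_sq, hca]
    have := Real.sin_nonneg_of_nonneg_of_le_pi ha0 (angle_le_pi x y)
    nlinarith [norm_nonneg u]
  have hsb : Real.sin (angle y z) = ‖v‖ := by
    have h1 : Real.sin (angle y z) ^ 2 = ‖v‖ ^ 2 := by
      rw [hnv, Real.sin_sq, hcb]
    have := Real.sin_nonneg_of_nonneg_of_le_pi hb0 (angle_le_pi y z)
    nlinarith [norm_nonneg v]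
  have huv : ⟪u, v⟫ = ⟪x, z⟫ - ⟪x, y⟫ * ⟪y, z⟫ := by
    simp only [hu, hv, inner_sub_left, inner_sub_right, real_inner_smul_left,
      real_inner_smul_right, hyy, real_inner_comm y x, real_inner_comm y z]
    ring
  have hcs : Real.cos (angle x y + angle y z) ≤ Real.cos (angle x z) := by
    rw [Real.cos_add, hca, hcb, hcc, hsa, hsb]
    have := abs_real_inner_le_norm u v
    have h2 : -(‖u‖ * ‖v‖) ≤ ⟪u, v⟫ := by
      cases' abs_le.mp this with h _; linarith
    nlinarith [huv]
  by_contra hlt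
  push_neg at hlt
  have := Real.strictAntiOn_cos (Set.mem_Icc.mpr ⟨by linarith, by linarith⟩)
      (Set.mem_Icc.mpr ⟨hc0, hcπ⟩) hlt
  linarith

lemma my_angle_triangle (x y z : V) : angle x z ≤ angle x y + angle y z := by
  by_cases hy : y = 0
  · subst hy
    rw [angle_zero_right, angle_zero_left]
    have := angle_le_pi x z
    linarith
  by_cases hx : x = 0
  · subst hx
    rw [angle_zero_left, angle_zero_left]
    have := angle_nonneg y z
    linarith
  by_cases hz : z = 0
  · subst hz
    rw [angle_zero_right, angle_zero_right]
    have := angle_nonneg x y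
    linarith
  have hx' : (0:ℝ) < ‖x‖⁻¹ := inv_pos.mpr (norm_pos_iff.mpr hx)
  have hy' : (0:ℝ) < ‖y‖⁻¹ := inv_pos.mpr (norm_pos_iff.mpr hy)
  have hz' : (0:ℝ) < ‖z‖⁻¹ := inv_pos.mpr (norm_pos_iff.mpr hz)
  have nx : ‖(‖x‖⁻¹ • x)‖ = 1 := by
    rw [norm_smul, norm_inv, norm_norm, inv_mul_cancel₀ (norm_ne_zero_iff.mpr hx)]
  have ny : ‖(‖y‖⁻¹ • y)‖ = 1 := by
    rw [norm_smul, norm_inv, norm_norm, inv_mul_cancel₀ (norm_ne_zero_iff.mpr hy)]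
  have nz : ‖(‖z‖⁻¹ • z)‖ = 1 := by
    rw [norm_smul, norm_inv, norm_norm, inv_mul_cancel₀ (norm_ne_zero_iff.mpr hz)]
  have := angle_triangle_unit nx ny nz
  rwa [angle_smul_left_of_pos _ (‖z‖⁻¹ • z) hx', angle_smul_right_of_pos x z hz',
    angle_smul_left_of_pos _ (‖y‖⁻¹ • y) hx', angle_smul_right_of_pos x y hy',
    angle_smul_left_of_pos _ (‖z‖⁻¹ • z) hy', angle_smul_right_of_pos y z hz'] at this

/-- Exterior angle of a triangle equals the sum of the two remote interior angles. -/
lemma my_ext_angle {X Y Z : V} (hXY : X ≠ Y) (hZY : Z ≠ Y) :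
    angle (Y - X) (Z - Y) = angle (Y - X) (Z - X) + angle (Z - Y) (Z - X) := by
  have h := angle_add_angle_sub_add_angle_sub_eq_pi
    (x := X - Y) (y := Z - Y) (sub_ne_zero.mpr hZY)
  have e1 : (X - Y) - (Z - Y) = X - Z := by abel
  have e2 : (Z - Y) - (X - Y) = Z - X := by abel
  rw [e1, e2] at h
  have h2 : angle (Y - X) (Z - Y) = π - angle (X - Y) (Z - Y) := by
    rw [show Y - X = -(X - Y) by abel, angle_neg_left]
  have h3 : angle (Y - X) (Z - X) = angle (X - Y) (X - Z) := by
    rw [show Y - X = -(X - Y) by abel, show Z - X = -(X - Z) by abel, angle_neg_neg]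
  rw [h2, h3]
  linarith

/-- Removing the vertex `Y` between `X` and `Z` does not increase total curvature. -/
lemma my_key_step (W X Y Z U : V) (hXY : X ≠ Y) (hZY : Z ≠ Y) :
    angle (X - W) (Z - X) + angle (Z - X) (U - Z) ≤
      angle (X - W) (Y - X) + angle (Y - X) (Z - Y) + angle (Z - Y) (U - Z) := by
  have t1 := my_angle_triangle (X - W) (Y - X) (Z - X)
  have t2 := my_angle_triangle (Z - X) (Z - Y) (U - Z)
  have e := my_ext_angle hXY hZY
  have c : angle (Z - X) (Z - Y) = angle (Z - Y) (Z - X) := angle_comm _ _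
  linarith

lemma my_fenchel (n : ℕ) (hn : 3 ≤ n) (q : ℤ → V)
    (hper : ∀ i : ℤ, q (i + n) = q i)
    (hd : ∀ i j : ℤ, 0 ≤ i → i < j → j < n → q i ≠ q j) :
    2 * π ≤ ∑ i ∈ Finset.range n,
      angle (q i - q ((i : ℤ) - 1)) (q ((i : ℤ) + 1) - q i) := by
  induction n, hn using Nat.le_induction generalizing q with
  | base =>
    have hA : q (-1 : ℤ) = q 2 := by have := hper (-1); norm_num at this; rw [← this]
    have hB : q (3 : ℤ) = q 0 := by have := hper 0; norm_num at this; rw [this]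
    have hAB : q (0:ℤ) ≠ q (1:ℤ) := hd 0 1 (by norm_num) (by norm_num) (by norm_num)
    have hAC : q (0:ℤ) ≠ q (2:ℤ) := hd 0 2 (by norm_num) (by norm_num) (by norm_num)
    have h := angle_add_angle_sub_add_angle_sub_eq_pi
      (x := q 1 - q 0) (y := q 2 - q 0)
      (sub_ne_zero.mpr (Ne.symm hAC))
    have e1 : (q 1 - q 0) - (q 2 - q 0) = q 1 - q (2:ℤ) := by abel
    have e2 : (q 2 - q 0) - (q 1 - q 0) = q 2 - q (1:ℤ) := by abel
    rw [e1, e2] at h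
    rw [Finset.sum_range_succ, Finset.sum_range_succ, Finset.sum_range_succ,
      Finset.sum_range_zero]
    push_cast
    rw [hA, hB]
    have f0 : angle (q 0 - q 2) (q 1 - q (0:ℤ)) = π - angle (q 1 - q 0) (q 2 - q (0:ℤ)) := by
      rw [show q 0 - q 2 = -(q 2 - q (0:ℤ)) by abel, angle_neg_left, angle_comm]
    have f1 : angle (q 1 - q 0) (q 2 - q (1:ℤ)) = π - angle (q 1 - q 0) (q 1 - q (2:ℤ)) := by
      rw [show q 2 - q 1 = -(q 1 - q (2:ℤ)) by abel, angle_neg_right]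
    have f2 : angle (q 2 - q 1) (q 0 - q (2:ℤ)) = π - angle (q 2 - q 0) (q 2 - q (1:ℤ)) := by
      rw [show q 0 - q 2 = -(q 2 - q (0:ℤ)) by abel, angle_neg_right, angle_comm]
    rw [f0, f1, f2]
    linarith
  | succ n hn3 ih =>
    obtain ⟨m, rfl⟩ : ∃ m, n = m + 3 := ⟨n - 3, by omega⟩
    set q' : ℤ → V := fun i => q (i % ((m:ℤ) + 3)) with hq'
    have hNpos : (0:ℤ) < (m:ℤ) + 3 := by positivity
    have hmod : ∀ i : ℤ, 0 ≤ i → i < (m:ℤ) + 3 → q' i = q i := by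
      intro i h0 h1; simp only [hq']; rw [Int.emod_eq_of_lt h0 h1]
    have hq'per : ∀ i : ℤ, q' (i + ((m:ℕ)+3 : ℕ)) = q' i := by
      intro i; simp only [hq']
      congr 1
      push_cast
      conv_lhs => rw [show i + ((m:ℤ) + 3) = i + ((m:ℤ) + 3) * 1 by ring]
      rw [Int.add_mul_emod_self_left]
    have hd' : ∀ i j : ℤ, 0 ≤ i → i < j → j < ((m:ℕ)+3 : ℕ) → q' i ≠ q' j := by
      intro i j h0 hij hj
      push_cast at hj
      rw [hmod i h0 (hij.trans hj), hmod j (h0.trans hij.le) hj]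
      exact hd i j h0 hij (by push_cast; omega)
    have IH := ih q' hq'per hd'
    refine IH.trans ?_
    have peel : ∀ f : ℕ → ℝ, ∑ i ∈ Finset.range (m+3+1), f i
        = (∑ i ∈ Finset.range (m+1), f (i+1)) + (f 0 + (f (m+2) + f (m+3))) := by
      intro f
      rw [Finset.sum_range_succ, show m+3 = (m+2)+1 by omega, Finset.sum_range_succ,
        Finset.sum_range_succ' f (m+1)]
      have h1 : m+2+1 = m+3 := rfl
      rw [h1]; ring
    have peel' : ∀ f : ℕ → ℝ, ∑ i ∈ Finset.range (m+3), f i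
        = (∑ i ∈ Finset.range (m+1), f (i+1)) + (f 0 + f (m+2)) := by
      intro f
      rw [show m+3 = (m+2)+1 by omega, Finset.sum_range_succ,
        Finset.sum_range_succ' f (m+1)]
      ring
    rw [peel, peel']
    have hmidle : ∀ i ∈ Finset.range (m+1),
        angle (q' (i+1:ℕ) - q' (((i+1:ℕ)) - 1)) (q' (((i+1:ℕ)) + 1) - q' (i+1:ℕ))
        = angle (q (i+1:ℕ) - q (((i+1:ℕ)) - 1)) (q (((i+1:ℕ)) + 1) - q (i+1:ℕ)) := by
      intro i hi
      have hi' := Finset.mem_range.mp hi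
      push_cast
      rw [hmod ((i:ℤ)+1) (by positivity) (by push_cast; omega),
        hmod ((i:ℤ)+1-1) (by omega) (by push_cast; omega),
        hmod ((i:ℤ)+1+1) (by omega) (by push_cast; omega)]
    rw [Finset.sum_congr rfl hmidle]
    refine add_le_add_right ?_ _
    push_cast
    have e0 : q' (0:ℤ) = q 0 := hmod 0 le_rfl (by omega)
    have e1 : q' (1:ℤ) = q 1 := hmod 1 (by norm_num) (by omega)
    have e2 : q' ((m:ℤ)+2) = q ((m:ℤ)+2) := hmod _ (by omega) (by omega)
    have e3 : q' ((m:ℤ)+2-1) = q ((m:ℤ)+1) := by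
      rw [show (m:ℤ)+2-1 = (m:ℤ)+1 by ring]; exact hmod _ (by omega) (by omega)
    have e4 : q' ((m:ℤ)+2+1) = q 0 := by
      simp only [hq']
      rw [show (m:ℤ)+2+1 = (m:ℤ)+3 by ring, Int.emod_self]
    have e5 : q' (-1:ℤ) = q ((m:ℤ)+2) := by
      simp only [hq']
      congr 1
      calc (-1:ℤ) % ((m:ℤ)+3) = (-1 + ((m:ℤ)+3)*1) % ((m:ℤ)+3) := by
              rw [Int.add_mul_emod_self_left]
        _ = ((m:ℤ)+2) % ((m:ℤ)+3) := by ring_nf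
        _ = (m:ℤ)+2 := Int.emod_eq_of_lt (by omega) (by omega)
    have p1 : q (-1:ℤ) = q ((m:ℤ)+3) := by
      have := hper (-1); push_cast at this
      rw [← this]; congr 1; ring
    have p2 : q ((m:ℤ)+3+1) = q 0 := by
      have := hper 0; push_cast at this
      rw [← this]; congr 1; ring
    have hXY : q ((m:ℤ)+2) ≠ q ((m:ℤ)+3) := hd _ _ (by omega) (by omega) (by push_cast; omega)
    have hZY : q (0:ℤ) ≠ q ((m:ℤ)+3) := hd _ _ le_rfl (by omega) (by push_cast; omega)
    have key := my_key_step (q ((m:ℤ)+1)) (q ((m:ℤ)+2)) (q ((m:ℤ)+3)) (q (0:ℤ)) (q (1:ℤ))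
      hXY hZY
    rw [show ((m:ℤ)+2-1) = (m:ℤ)+1 by ring, show ((m:ℤ)+2+1) = (m:ℤ)+3 by ring,
      show ((m:ℤ)+3-1) = (m:ℤ)+2 by ring, e5, p1, p2]
    have e6 : q' ((m:ℤ)+1) = q ((m:ℤ)+1) := hmod _ (by omega) (by omega)
    have e7 : q' ((m:ℤ)+3) = q 0 := by simp only [hq']; rw [Int.emod_self]
    rw [e0, e1, e2, e6, e7]
    linarith [key]

/-- Fenchel's theorem for closed equilateral polygons and its consequence: the
regular `n`-gon minimizes the maximal discrete curvature. The sum of the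
exterior angles is at least `2π`, hence the maximal exterior angle is at least
`2π/n`, with equality iff all exterior angles equal `2π/n`; consequently
`maxCurv(p) = max_i 2 tan(φ_i/2) ≥ 2 tan(π/n) = maxCurv(g_n)`. -/
theorem fenchel_polygon_maxCurv {d : ℕ} (n : ℕ) (hn : 3 ≤ n)
    (p : ℤ → EuclideanSpace ℝ (Fin d))
    (hper : ∀ i : ℤ, p (i + n) = p i)
    (hunit : ∀ i : ℤ, dist (p (i + 1)) (p i) = 1)
    (hvert : ∀ i j : ℤ, p i = p j → (i - j) % (n : ℤ) = 0)
    (φ : ℤ → ℝ)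
    (hφ : ∀ i : ℤ, φ i = InnerProductGeometry.angle (p i - p (i - 1)) (p (i + 1) - p i)) :
    2 * π ≤ (∑ i ∈ Finset.range n, φ i) ∧
    2 * π / n ≤ (Finset.range n).sup' (Finset.nonempty_range_iff.mpr (by omega)) (fun i => φ i) ∧
    ((Finset.range n).sup' (Finset.nonempty_range_iff.mpr (by omega)) (fun i => φ i) = 2 * π / n
      ↔ ∀ i : ℤ, φ i = 2 * π / n) ∧
    2 * Real.tan (π / n) ≤
      (Finset.range n).sup' (Finset.nonempty_range_iff.mpr (by omega))
        (fun i => 2 * Real.tan (φ i / 2)) := by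
  have hn0 : (0:ℝ) < n := by positivity
  have hnR : (3:ℝ) ≤ n := by exact_mod_cast hn
  have hd : ∀ i j : ℤ, 0 ≤ i → i < j → j < (n:ℤ) → p i ≠ p j := by
    intro i j h0 hij hj hEq
    have h := hvert i j hEq
    have hdvd : (n:ℤ) ∣ (i - j) := Int.dvd_of_emod_eq_zero h
    have hdvd' : (n:ℤ) ∣ (j - i) := by
      rw [show j - i = -(i - j) by ring]; exact dvd_neg.mpr hdvd
    have := Int.le_of_dvd (by omega) hdvd'
    omega
  have part1 : 2 * π ≤ ∑ i ∈ Finset.range n, φ i := by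
    have h := my_fenchel n hn p hper hd
    have e : ∑ i ∈ Finset.range n, φ (i:ℤ)
        = ∑ i ∈ Finset.range n,
          InnerProductGeometry.angle (p i - p ((i:ℤ) - 1)) (p ((i:ℤ) + 1) - p i) :=
      Finset.sum_congr rfl (fun i _ => hφ i)
    rw [e]; exact h
  have hne : (Finset.range n).Nonempty := Finset.nonempty_range_iff.mpr (by omega)
  set M := (Finset.range n).sup' hne (fun i : ℕ => φ i) with hMdef
  have hle : ∀ i ∈ Finset.range n, φ (i:ℤ) ≤ M := by
    intro i hi
    rw [hMdef]
    exact Finset.le_sup' (fun i : ℕ => φ (i:ℤ)) hi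
  have part2 : 2 * π / n ≤ M := by
    have hsum_le : ∑ i ∈ Finset.range n, φ (i:ℤ) ≤ (n:ℝ) * M := by
      have := Finset.sum_le_card_nsmul (Finset.range n) (fun i : ℕ => φ i) M hle
      rwa [Finset.card_range, nsmul_eq_mul] at this
    rw [div_le_iff₀ hn0]
    nlinarith
  have hφlt : ∀ i : ℤ, φ i < π := by
    intro i
    have hle' : φ i ≤ π := by rw [hφ]; exact InnerProductGeometry.angle_le_pi _ _
    refine lt_of_le_of_ne hle' ?_
    intro hpi
    rw [hφ] at hpi
    obtain ⟨hx0, r, hr, hyr⟩ := InnerProductGeometry.angle_eq_pi_iff.mp hpi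
    have n1 : ‖p (i+1) - p i‖ = 1 := by rw [← dist_eq_norm]; exact hunit i
    have n2 : ‖p i - p (i-1)‖ = 1 := by
      rw [← dist_eq_norm]
      have := hunit (i-1); rwa [show i-1+1 = i by ring] at this
    have habs : |r| = 1 := by
      have hc := congrArg norm hyr
      rw [n1, norm_smul, n2, Real.norm_eq_abs] at hc
      linarith [hc]
    have hr1 : r = -1 := by
      rcases (abs_eq (by norm_num : (0:ℝ) ≤ 1)).mp habs with h | h
      · linarith
      · exact h
    rw [hr1, neg_one_smul, neg_sub] at hyr
    have heq : p (i+1) = p (i-1) := sub_left_inj.mp hyr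
    have h2 := hvert (i+1) (i-1) heq
    have hdvd : (n:ℤ) ∣ (i+1 - (i-1)) := Int.dvd_of_emod_eq_zero h2
    rw [show i+1-(i-1) = 2 by ring] at hdvd
    have := Int.le_of_dvd (by norm_num) hdvd
    omega
  have hrange_eq : M = 2*π/n → ∀ i ∈ Finset.range n, φ (i:ℤ) = 2*π/n := by
    intro hM i hi
    by_contra hne'
    have hlt : φ (i:ℤ) < 2*π/n := lt_of_le_of_ne (hM ▸ hle i hi) hne'
    have hsum_lt : ∑ j ∈ Finset.range n, φ (j:ℤ)
        < ∑ _j ∈ Finset.range n, 2*π/(n:ℝ) :=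
      Finset.sum_lt_sum (fun j hj => hM ▸ hle j hj) ⟨i, hi, hlt⟩
    rw [Finset.sum_const, Finset.card_range, nsmul_eq_mul] at hsum_lt
    have he : (n:ℝ) * (2*π/n) = 2*π := by field_simp
    linarith
  have hφper : ∀ i : ℤ, φ (i + n) = φ i := by
    intro i
    rw [hφ, hφ, show i + (n:ℤ) - 1 = (i-1) + n by ring, show i + (n:ℤ) + 1 = (i+1) + n by ring,
      hper i, hper (i-1), hper (i+1)]
  have hφadd : ∀ (k : ℕ) (i : ℤ), φ (i + k * n) = φ i := by
    intro k
    induction k with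
    | zero => intro i; norm_num
    | succ k ihk =>
      intro i
      have e : i + ((k+1:ℕ):ℤ) * n = (i + (k:ℕ) * n) + n := by push_cast; ring
      rw [e, hφper, ihk]
  have hφmod : ∀ i : ℤ, φ i = φ (i % n) := by
    intro i
    have h := Int.emod_add_mul_ediv i n
    rcases le_or_gt 0 (i / (n:ℤ)) with ht | ht
    · have e : i = i % n + ((i / (n:ℤ)).toNat : ℤ) * n := by
        rw [Int.toNat_of_nonneg ht]; linarith [h]
      conv_lhs => rw [e]
      rw [hφadd]
    · have e : i % (n:ℤ) = i + (((-(i / (n:ℤ))).toNat : ℤ)) * n := by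
        rw [Int.toNat_of_nonneg (by linarith : (0:ℤ) ≤ -(i / (n:ℤ)))]; linarith [h]
      rw [e, hφadd]
  have part3 : M = 2*π/n ↔ ∀ i : ℤ, φ i = 2*π/n := by
    constructor
    · intro hM i
      rw [hφmod i]
      have h0 : 0 ≤ i % (n:ℤ) := Int.emod_nonneg i (by omega)
      have h1 : i % (n:ℤ) < n := Int.emod_lt_of_pos i (by omega)
      have e : i % (n:ℤ) = (((i % (n:ℤ)).toNat : ℕ) : ℤ) := (Int.toNat_of_nonneg h0).symm
      rw [e]
      exact hrange_eq hM _ (Finset.mem_range.mpr (by omega))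
    · intro hall
      rw [hMdef, Finset.sup'_congr hne rfl (fun i _ => hall (i:ℤ)), Finset.sup'_const]
  refine ⟨part1, part2, part3, ?_⟩
  obtain ⟨i₀, hi₀, hM⟩ := Finset.exists_mem_eq_sup' hne (fun i : ℕ => φ i)
  have h1 : 2*π/n ≤ φ (i₀:ℤ) := by rw [hMdef, hM] at part2; exact part2
  have htan : Real.tan (π / n) ≤ Real.tan (φ (i₀:ℤ) / 2) := by
    have hππ : π / (n:ℝ) < π/2 := by
      apply div_lt_div_of_pos_left Real.pi_pos (by norm_num)
      linarith
    have hm1 : π / (n:ℝ) ∈ Set.Ioo (-(π/2)) (π/2) := by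
      constructor
      · have : (0:ℝ) < π / n := by positivity
        linarith [Real.pi_pos]
      · exact hππ
    have hm2 : φ (i₀:ℤ) / 2 ∈ Set.Ioo (-(π/2)) (π/2) := by
      constructor
      · have : 0 ≤ φ (i₀:ℤ) := by rw [hφ]; exact InnerProductGeometry.angle_nonneg _ _
        have := Real.pi_pos
        linarith
      · linarith [hφlt (i₀:ℤ)]
    exact Real.strictMonoOn_tan.monotoneOn hm1 hm2 (by
      have : π / (n:ℝ) = 2*π/n/2 := by ring
      linarith)
  have h2 : 2 * Real.tan (φ (i₀:ℤ) / 2)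
      ≤ (Finset.range n).sup' hne (fun i : ℕ => 2 * Real.tan (φ (i:ℤ) / 2)) :=
    Finset.le_sup' (fun i : ℕ => 2 * Real.tan (φ (i:ℤ) / 2)) hi₀
  linarith
end

section
/- Let γ : S_L → ℝ^d be a closed curve of class C^{1,1} parametrized by arc length with Lipschitz constant of γ' equal to κ_max. Then for all t, s with d_{S_L}(t,s) ≤ π/κ_max (and d_{S_L}(t,s) ≤ L/2), the chord length satisfies |γ(t) − γ(s)| ≥ (2/κ_max)·sin(κ_max · d_{S_L}(t,s)/2). -/
open Real
open scoped Real

/-- The intrinsic distance on the circle `ℝ/Lℝ` between (representatives of) two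
parameters. -/
noncomputable def circleDist (L t s : ℝ) : ℝ := ⨅ k : ℤ, |t - s - k * L|

section helpers
open scoped RealInnerProductSpace

variable {E : Type*} [NormedAddCommGroup E] [InnerProductSpace ℝ E]

lemma inner_bounds {a b : E} (ha : ‖a‖ = 1) (hb : ‖b‖ = 1) :
    -1 ≤ ⟪a, b⟫ ∧ ⟪a, b⟫ ≤ 1 := by
  have h := abs_real_inner_le_norm a b
  rw [ha, hb, mul_one] at h
  exact abs_le.mp h

lemma arccos_antitone {x y : ℝ} (h : x ≤ y) : arccos y ≤ arccos x := by
  unfold Real.arccos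
  have := Real.monotone_arcsin h
  linarith

lemma angle_triangle {a b c : E} (ha : ‖a‖ = 1) (hb : ‖b‖ = 1) (hc : ‖c‖ = 1) :
    arccos ⟪a, c⟫ ≤ arccos ⟪a, b⟫ + arccos ⟪b, c⟫ := by
  set α := arccos ⟪a, b⟫ with hα
  set β := arccos ⟪b, c⟫ with hβ
  by_cases hπ : π ≤ α + β
  · exact (arccos_le_pi _).trans hπ
  push_neg at hπ
  have hab := inner_bounds ha hb
  have hbc := inner_bounds hb hc
  have hcosα : cos α = ⟪a, b⟫ := cos_arccos hab.1 hab.2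
  have hcosβ : cos β = ⟪b, c⟫ := cos_arccos hbc.1 hbc.2
  set p : E := a - ⟪a, b⟫ • b with hpdef
  set q : E := c - ⟪c, b⟫ • b with hqdef
  have hb2 : ⟪b, b⟫ = 1 := by rw [real_inner_self_eq_norm_sq, hb]; norm_num
  have hp2 : ‖p‖ ^ 2 = 1 - ⟪a, b⟫ ^ 2 := by
    rw [← real_inner_self_eq_norm_sq, hpdef]
    simp only [inner_sub_left, inner_sub_right, real_inner_smul_left, real_inner_smul_right,
      hb2, mul_one]
    rw [real_inner_self_eq_norm_sq a, ha, real_inner_comm b a]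
    ring
  have hq2 : ‖q‖ ^ 2 = 1 - ⟪c, b⟫ ^ 2 := by
    rw [← real_inner_self_eq_norm_sq, hqdef]
    simp only [inner_sub_left, inner_sub_right, real_inner_smul_left, real_inner_smul_right,
      hb2, mul_one]
    rw [real_inner_self_eq_norm_sq c, hc, real_inner_comm b c]
    ring
  have hsinα : sin α = ‖p‖ := by
    rw [hα, sin_arccos, ← hp2, Real.sqrt_sq (norm_nonneg p)]
  have hsinβ : sin β = ‖q‖ := by
    rw [hβ, sin_arccos, real_inner_comm c b, ← hq2, Real.sqrt_sq (norm_nonneg q)]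
  have hpq : ⟪a, c⟫ = ⟪a, b⟫ * ⟪c, b⟫ + ⟪p, q⟫ := by
    simp only [hpdef, hqdef, inner_sub_left, inner_sub_right, real_inner_smul_left,
      real_inner_smul_right, hb2, mul_one]
    rw [real_inner_comm b c, real_inner_comm b a]
    ring
  have hCS : -(‖p‖ * ‖q‖) ≤ ⟪p, q⟫ := neg_le_of_abs_le (abs_real_inner_le_norm p q)
  have hkey : cos (α + β) ≤ ⟪a, c⟫ := by
    rw [Real.cos_add, hcosα, hcosβ, hsinα, hsinβ, hpq, real_inner_comm b c]
    nlinarith [hCS]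
  calc arccos ⟪a, c⟫ ≤ arccos (cos (α + β)) := arccos_antitone hkey
    _ = α + β := arccos_cos (add_nonneg (arccos_nonneg _) (arccos_nonneg _)) hπ.le


lemma arccos_inner_eq {a b : E} (ha : ‖a‖ = 1) (hb : ‖b‖ = 1) :
    arccos ⟪a, b⟫ = 2 * arcsin (‖a - b‖ / 2) := by
  set y := ‖a - b‖ / 2 with hy
  have hy0 : 0 ≤ y := by positivity
  have hy1 : y ≤ 1 := by
    have : ‖a - b‖ ≤ 2 := by
      calc ‖a - b‖ ≤ ‖a‖ + ‖b‖ := norm_sub_le a b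
        _ = 2 := by rw [ha, hb]; norm_num
    rw [hy]; linarith
  have hinner : ⟪a, b⟫ = 1 - 2 * y ^ 2 := by
    have hsq : ‖a - b‖ ^ 2 = 2 - 2 * ⟪a, b⟫ := by
      rw [← real_inner_self_eq_norm_sq]
      simp only [inner_sub_left, inner_sub_right]
      rw [real_inner_self_eq_norm_sq a, real_inner_self_eq_norm_sq b, ha, hb,
        real_inner_comm b a]
      ring
    have : (2 * y) ^ 2 = 2 - 2 * ⟪a, b⟫ := by
      rw [hy]; rw [show 2 * (‖a - b‖ / 2) = ‖a - b‖ by ring, hsq]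
    nlinarith
  have hcos : cos (2 * arcsin y) = 1 - 2 * y ^ 2 := by
    rw [Real.cos_two_mul, ← Real.sin_sq_add_cos_sq (arcsin y),
      Real.sin_arcsin (by linarith) hy1]
    ring
  rw [hinner, ← hcos, arccos_cos]
  · exact mul_nonneg (by norm_num) (arcsin_nonneg.mpr hy0)
  · have := Real.arcsin_le_pi_div_two y
    linarith

lemma subdiv_bound (f : ℝ → E) (hf : ∀ u, ‖f u‖ = 1) (κ δ : ℝ) (hδ : 0 ≤ δ)
    (hlip : ∀ u w, ‖f u - f w‖ ≤ κ * |u - w|) :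
    ∀ n : ℕ, ∀ u : ℝ, arccos ⟪f u, f (u + n * δ)⟫ ≤ n * (2 * arcsin (κ * δ / 2)) := by
  intro n
  induction n with
  | zero =>
    intro u
    simp only [Nat.cast_zero, zero_mul, add_zero]
    rw [real_inner_self_eq_norm_sq, hf u]
    norm_num [Real.arccos_one]
  | succ n ih =>
    intro u
    have hstep : arccos ⟪f (u + n * δ), f (u + (n + 1 : ℕ) * δ)⟫ ≤ 2 * arcsin (κ * δ / 2) := by
      rw [arccos_inner_eq (hf _) (hf _)]
      have hd : ‖f (u + n * δ) - f (u + (n + 1 : ℕ) * δ)‖ ≤ κ * δ := by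
        have := hlip (u + n * δ) (u + (n + 1 : ℕ) * δ)
        have habs : |u + n * δ - (u + (n + 1 : ℕ) * δ)| = δ := by
          push_cast
          rw [show u + n * δ - (u + (n + 1) * δ) = -δ by ring, abs_neg, abs_of_nonneg hδ]
        rw [habs] at this
        exact this
      have := Real.monotone_arcsin (by linarith : ‖f (u + n * δ) - f (u + (n + 1 : ℕ) * δ)‖ / 2 ≤ κ * δ / 2)
      linarith
    calc arccos ⟪f u, f (u + (n + 1 : ℕ) * δ)⟫
        ≤ arccos ⟪f u, f (u + n * δ)⟫ + arccos ⟪f (u + n * δ), f (u + (n + 1 : ℕ) * δ)⟫ :=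
          angle_triangle (hf _) (hf _) (hf _)
      _ ≤ n * (2 * arcsin (κ * δ / 2)) + 2 * arcsin (κ * δ / 2) := add_le_add (ih u) hstep
      _ = (n + 1 : ℕ) * (2 * arcsin (κ * δ / 2)) := by push_cast; ring

open Filter Topology in
lemma tendsto_n_arcsin (x : ℝ) (hx : 0 < x) :
    Tendsto (fun n : ℕ => (n : ℝ) * (2 * arcsin (x / (2 * n)))) atTop (𝓝 x) := by
  have hda : HasDerivAt arcsin 1 0 := by
    have := Real.hasDerivAt_arcsin (by norm_num : (0:ℝ) ≠ -1) (by norm_num : (0:ℝ) ≠ 1)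
    simpa using this
  have hslope : Tendsto (slope arcsin 0) (𝓝[≠] 0) (𝓝 1) :=
    hasDerivAt_iff_tendsto_slope.mp hda
  have hy : Tendsto (fun n : ℕ => x / (2 * n)) atTop (𝓝 0) := by
    apply Tendsto.div_atTop tendsto_const_nhds
    exact (tendsto_natCast_atTop_atTop (R := ℝ)).const_mul_atTop (by norm_num)
  have hy' : Tendsto (fun n : ℕ => x / (2 * n)) atTop (𝓝[≠] 0) := by
    rw [tendsto_nhdsWithin_iff]
    refine ⟨hy, ?_⟩
    filter_upwards [eventually_ge_atTop 1] with n hn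
    have hn' : (0:ℝ) < n := by exact_mod_cast hn
    have : 0 < x / (2 * n) := by positivity
    exact ne_of_gt this
  have hcomp : Tendsto (fun n : ℕ => slope arcsin 0 (x / (2 * n))) atTop (𝓝 1) :=
    hslope.comp hy'
  have heq : ∀ᶠ n : ℕ in atTop,
      x * slope arcsin 0 (x / (2 * n)) = (n : ℝ) * (2 * arcsin (x / (2 * n))) := by
    filter_upwards [eventually_ge_atTop 1] with n hn
    have hn' : (0:ℝ) < n := by exact_mod_cast hn
    have hyn : x / (2 * n) ≠ 0 := by positivity
    rw [slope_def_field]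
    simp only [Real.arcsin_zero, sub_zero]
    field_simp
  have := (hcomp.const_mul x)
  rw [mul_one] at this
  exact Tendsto.congr' heq this

open Filter Topology in
lemma angle_bound_of_le (f : ℝ → E) (hf : ∀ u, ‖f u‖ = 1) (κ : ℝ) (hκ : 0 < κ)
    (hlip : ∀ u w, ‖f u - f w‖ ≤ κ * |u - w|) (u w : ℝ) (huw : u ≤ w) :
    arccos ⟪f u, f w⟫ ≤ κ * (w - u) := by
  rcases eq_or_lt_of_le huw with rfl | hlt
  · rw [real_inner_self_eq_norm_sq, hf u]
    norm_num [Real.arccos_one]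
  set D := w - u with hD
  have hD0 : 0 < D := by simp [hD]; linarith
  have hx : 0 < κ * D := mul_pos hκ hD0
  have hev : ∀ᶠ n : ℕ in atTop,
      arccos ⟪f u, f w⟫ ≤ (n : ℝ) * (2 * arcsin (κ * D / (2 * n))) := by
    filter_upwards [eventually_ge_atTop 1] with n hn
    have hn' : (0:ℝ) < n := by exact_mod_cast hn
    have hw : w = u + n * (D / n) := by field_simp; rw [hD]; ring
    have := subdiv_bound f hf κ (D / n) (by positivity) hlip n u
    rw [← hw] at this
    have harg : κ * (D / n) / 2 = κ * D / (2 * n) := by ring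
    rwa [harg] at this
  exact ge_of_tendsto (tendsto_n_arcsin (κ * D) hx) hev

lemma angle_bound (f : ℝ → E) (hf : ∀ u, ‖f u‖ = 1) (κ : ℝ) (hκ : 0 < κ)
    (hlip : ∀ u w, ‖f u - f w‖ ≤ κ * |u - w|) (u w : ℝ) :
    arccos ⟪f u, f w⟫ ≤ κ * |u - w| := by
  rcases le_total u w with h | h
  · rw [abs_of_nonpos (by linarith), neg_sub]
    exact angle_bound_of_le f hf κ hκ hlip u w h
  · rw [abs_of_nonneg (by linarith), real_inner_comm]
    have := angle_bound_of_le f hf κ hκ hlip w u h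
    linarith [this]

lemma circleDist_bdd (L t s : ℝ) : BddBelow (Set.range fun k : ℤ => |t - s - k * L|) :=
  ⟨0, by rintro _ ⟨k, rfl⟩; positivity⟩

lemma circleDist_le_abs' (L t s : ℝ) : circleDist L t s ≤ |t - s| := by
  have := ciInf_le (circleDist_bdd L t s) (0 : ℤ)
  simpa [circleDist] using this

lemma circleDist_eq_round (L : ℝ) (hL : 0 < L) (t s : ℝ) :
    circleDist L t s = |t - s - round ((t - s) / L) * L| := by
  set k₀ := round ((t - s) / L) with hk₀
  have hr : |t - s - k₀ * L| ≤ L / 2 := by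
    have h1 : |(t - s) / L - k₀| ≤ 1 / 2 := abs_sub_round ((t - s) / L)
    have h2 : t - s - k₀ * L = ((t - s) / L - k₀) * L := by field_simp
    rw [h2, abs_mul, abs_of_pos hL]
    calc |(t - s) / L - ↑k₀| * L ≤ 1 / 2 * L := by
          exact mul_le_mul_of_nonneg_right h1 hL.le
      _ = L / 2 := by ring
  apply le_antisymm
  · exact ciInf_le (circleDist_bdd L t s) k₀
  · apply le_ciInf
    intro k
    by_cases hk : k = k₀
    · rw [hk]
    · have hge : (1 : ℝ) ≤ |(k₀ - k : ℤ)| := by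
        exact_mod_cast Int.one_le_abs (sub_ne_zero.mpr (Ne.symm hk))
      have : L / 2 ≤ |t - s - k * L| := by
        have h3 : |((k₀ - k : ℤ) : ℝ) * L| ≤ |t - s - k * L| + |t - s - k₀ * L| := by
          have : ((k₀ - k : ℤ) : ℝ) * L = (t - s - k * L) - (t - s - k₀ * L) := by
            push_cast; ring
          rw [this]
          exact abs_sub _ _
        rw [abs_mul, abs_of_pos hL] at h3
        push_cast at h3 hge
        nlinarith
      linarith

lemma chord_aux (κ : ℝ) (hκ : 0 < κ) (γ : ℝ → E)
    (hdiff : Differentiable ℝ γ) (harc : ∀ t, ‖deriv γ t‖ = 1)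
    (hlip : ∀ u w, ‖deriv γ u - deriv γ w‖ ≤ κ * |u - w|)
    (a b : ℝ) (hab : a ≤ b) (hπ : κ * (b - a) ≤ π) :
    2 / κ * Real.sin (κ * (b - a) / 2) ≤ ‖γ b - γ a‖ := by
  set m := (a + b) / 2 with hm
  set v := deriv γ m with hv
  have hv1 : ‖v‖ = 1 := harc m
  -- continuity of the derivative
  have hcont : Continuous (deriv γ) := by
    have : LipschitzWith κ.toNNReal (deriv γ) := by
      apply LipschitzWith.of_dist_le_mul
      intro x y
      rw [dist_eq_norm, Real.dist_eq, Real.coe_toNNReal κ hκ.le]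
      exact hlip x y
    exact this.continuous
  -- the cosine integrand
  have hF : ∀ u : ℝ, HasDerivAt (fun u => Real.sin (κ * (u - m)) / κ) (Real.cos (κ * (u - m))) u := by
    intro u
    have h1 : HasDerivAt (fun u : ℝ => κ * (u - m)) κ u := by
      simpa using ((hasDerivAt_id u).sub_const m).const_mul κ
    have h2 : HasDerivAt (fun u => Real.sin (κ * (u - m))) (Real.cos (κ * (u - m)) * κ) u :=
      by have := (Real.hasDerivAt_sin (κ * (u - m))).comp u h1; exact this
    have h3 := h2.div_const κ
    simpa [mul_div_assoc, mul_div_cancel_right₀ _ (ne_of_gt hκ)] using h3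
  have hI1 : ∫ u in a..b, Real.cos (κ * (u - m)) = 2 / κ * Real.sin (κ * (b - a) / 2) := by
    rw [intervalIntegral.integral_eq_sub_of_hasDerivAt (fun u _ => hF u)
      ((Continuous.intervalIntegrable (Real.continuous_cos.comp (continuous_const.mul (continuous_id.sub continuous_const))) a b))]
    have hbm : b - m = (b - a) / 2 := by rw [hm]; ring
    have ham : a - m = -((b - a) / 2) := by rw [hm]; ring
    rw [hbm, ham, show κ * -((b - a) / 2) = -(κ * ((b - a) / 2)) by ring, Real.sin_neg]
    rw [show κ * ((b - a) / 2) = κ * (b - a) / 2 by ring]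
    field_simp
    ring
  have hG : ∀ u : ℝ, HasDerivAt (fun u => ⟪v, γ u⟫) ⟪v, deriv γ u⟫ u := by
    intro u
    exact ((innerSL ℝ v).hasFDerivAt.comp_hasDerivAt u (hdiff u).hasDerivAt)
  have hI2 : ∫ u in a..b, ⟪v, deriv γ u⟫ = ⟪v, γ b - γ a⟫ := by
    rw [intervalIntegral.integral_eq_sub_of_hasDerivAt (fun u _ => hG u)
      ((Continuous.intervalIntegrable (continuous_const.inner hcont) a b))]
    rw [inner_sub_right]
  have hmono : ∀ u ∈ Set.Icc a b, Real.cos (κ * (u - m)) ≤ ⟪v, deriv γ u⟫ := by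
    rintro u ⟨hu1, hu2⟩
    have hbound := angle_bound (deriv γ) harc κ hκ hlip u m
    have habs : |u - m| ≤ (b - a) / 2 := by
      rw [abs_le]; simp only [hm]; constructor <;> linarith
    have hle : κ * |u - m| ≤ π := by
      have h1 : κ * |u - m| ≤ κ * ((b - a) / 2) := by
        exact mul_le_mul_of_nonneg_left habs hκ.le
      nlinarith [Real.pi_pos]
    have hib := inner_bounds (harc u) (harc m)
    have hcoseq : Real.cos (arccos ⟪deriv γ u, deriv γ m⟫) = ⟪deriv γ u, deriv γ m⟫ :=
      Real.cos_arccos hib.1 hib.2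
    have hcosle : Real.cos (κ * |u - m|) ≤ ⟪deriv γ u, deriv γ m⟫ := by
      rw [← hcoseq]
      exact Real.cos_le_cos_of_nonneg_of_le_pi (Real.arccos_nonneg _) hle hbound
    have habs2 : Real.cos (κ * (u - m)) = Real.cos (κ * |u - m|) := by
      rw [show κ * |u - m| = |κ * (u - m)| by rw [abs_mul, abs_of_pos hκ], Real.cos_abs]
    rw [habs2, hv, real_inner_comm]
    exact hcosle
  have hint1 : IntervalIntegrable (fun u => Real.cos (κ * (u - m))) MeasureTheory.volume a b :=
    Continuous.intervalIntegrable (Real.continuous_cos.comp (continuous_const.mul (continuous_id.sub continuous_const))) a b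
  have hint2 : IntervalIntegrable (fun u => ⟪v, deriv γ u⟫) MeasureTheory.volume a b :=
    Continuous.intervalIntegrable (continuous_const.inner hcont) a b
  calc 2 / κ * Real.sin (κ * (b - a) / 2) = ∫ u in a..b, Real.cos (κ * (u - m)) := hI1.symm
    _ ≤ ∫ u in a..b, ⟪v, deriv γ u⟫ :=
        intervalIntegral.integral_mono_on hab hint1 hint2 hmono
    _ = ⟪v, γ b - γ a⟫ := hI2
    _ ≤ ‖γ b - γ a‖ := by
        have := real_inner_le_norm v (γ b - γ a)
        rwa [hv1, one_mul] at this

end helpers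

/-- Schur-type chord estimate: a closed `C^{1,1}` arc-length curve whose unit
tangent is `κ_max`-Lipschitz (w.r.t. the intrinsic metric) satisfies
`|γ(t) − γ(s)| ≥ (2/κ_max)·sin(κ_max·d(t,s)/2)` whenever `d(t,s) ≤ π/κ_max`. -/
theorem chord_estimate_C11 {d : ℕ} (L kmax : ℝ) (hL : 0 < L) (hk : 0 < kmax)
    (γ : ℝ → EuclideanSpace ℝ (Fin d))
    (hper : ∀ t, γ (t + L) = γ t)
    (hdiff : Differentiable ℝ γ)
    (harc : ∀ t, ‖deriv γ t‖ = 1)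
    (hlipderiv : ∀ t s : ℝ, ‖deriv γ t - deriv γ s‖ ≤ kmax * circleDist L t s) :
    ∀ t s : ℝ, circleDist L t s ≤ π / kmax → circleDist L t s ≤ L / 2 →
      (2 / kmax) * Real.sin (kmax * circleDist L t s / 2) ≤ dist (γ t) (γ s) := by
  intro t s h1 _h2
  have hlip' : ∀ u w : ℝ, ‖deriv γ u - deriv γ w‖ ≤ kmax * |u - w| := fun u w =>
    (hlipderiv u w).trans (mul_le_mul_of_nonneg_left (circleDist_le_abs' L u w) hk.le)
  set k₀ := round ((t - s) / L) with hk₀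
  have hDval : circleDist L t s = |t - s - k₀ * L| := circleDist_eq_round L hL t s
  have hper' : γ (s + (k₀ : ℝ) * L) = γ s := (Function.Periodic.int_mul hper k₀) s
  have hκD : kmax * circleDist L t s ≤ π := by
    have := (div_le_div_iff_of_pos_right hk).mpr h1
    calc kmax * circleDist L t s = circleDist L t s * kmax := mul_comm _ _
      _ ≤ π / kmax * kmax := by nlinarith
      _ = π := by field_simp
  rcases le_total (s + (k₀ : ℝ) * L) t with hcase | hcase
  · have hba : t - (s + (k₀ : ℝ) * L) = circleDist L t s := by
      rw [hDval, abs_of_nonneg (by linarith)]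
      ring
    have := chord_aux kmax hk γ hdiff harc hlip' (s + (k₀ : ℝ) * L) t hcase
      (by rw [hba]; exact hκD)
    rw [hba, hper'] at this
    rwa [dist_eq_norm]
  · have hba : (s + (k₀ : ℝ) * L) - t = circleDist L t s := by
      rw [hDval, abs_of_nonpos (by linarith)]
      ring
    have := chord_aux kmax hk γ hdiff harc hlip' t (s + (k₀ : ℝ) * L) hcase
      (by rw [hba]; exact hκD)
    rw [hba, hper'] at this
    rw [dist_eq_norm, norm_sub_rev]
    exact this
end
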